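/- Barbalat's lemma: if g : ℝ → ℝ is uniformly continuous on [0, ∞) and the limit lim_{t→∞} ∫_0^t g(τ) dτ exists and is finite, then g(t) → 0 as t → ∞. -/
import Mathlib


/-- Barbalat's lemma. -/
theorem stmt_2 (g : ℝ → ℝ) (hu : UniformContinuousOn g (Set.Ici 0))
    (L : ℝ)
    (hL : Filter.Tendsto (fun t => ∫ τ in (0:ℝ)..t, g τ) Filter.atTop (nhds L)) :
    Filter.Tendsto g Filter.atTop (nhds 0) := by
  have hc : ContinuousOn g (Set.Ici 0) := hu.continuousOn
  have hint : ∀ a b : ℝ, 0 ≤ a → a ≤ b → IntervalIntegrable g MeasureTheory.volume a b := by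
    intro a b ha hab
    apply ContinuousOn.intervalIntegrable
    apply hc.mono
    rw [Set.uIcc_of_le hab]
    intro x hx
    exact le_trans ha hx.1
  by_contra hcon
  rw [Metric.tendsto_atTop] at hcon
  push_neg at hcon
  obtain ⟨ε, hε, hbad⟩ := hcon
  obtain ⟨δ, hδ, hunif⟩ := Metric.uniformContinuousOn_iff.mp hu (ε/2) (by linarith)
  set c := δ/2 with hc_def
  have hcpos : 0 < c := by positivity
  have hdiff : Filter.Tendsto (fun t => (∫ τ in (0:ℝ)..(t+c), g τ) - ∫ τ in (0:ℝ)..t, g τ)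
      Filter.atTop (nhds 0) := by
    have h1 : Filter.Tendsto (fun t => ∫ τ in (0:ℝ)..(t+c), g τ) Filter.atTop (nhds L) :=
      hL.comp (Filter.tendsto_atTop_add_const_right _ c Filter.tendsto_id)
    simpa using h1.sub hL
  rw [Metric.tendsto_atTop] at hdiff
  obtain ⟨N, hN⟩ := hdiff (ε/2 * c) (by positivity)
  obtain ⟨t, ht, htbad⟩ := hbad (max N 0)
  have htN : N ≤ t := le_trans (le_max_left _ _) ht
  have ht0 : (0:ℝ) ≤ t := le_trans (le_max_right _ _) ht
  have hdist : dist ((∫ τ in (0:ℝ)..(t+c), g τ) - ∫ τ in (0:ℝ)..t, g τ) 0 < ε/2 * c := hN t htN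
  rw [Real.dist_eq, sub_zero] at hdist
  have hsub : (∫ τ in (0:ℝ)..(t+c), g τ) - (∫ τ in (0:ℝ)..t, g τ) = ∫ τ in t..(t+c), g τ :=
    intervalIntegral.integral_interval_sub_left (hint 0 (t+c) le_rfl (by linarith))
      (hint 0 t le_rfl ht0)
  rw [hsub] at hdist
  rw [Real.dist_eq, sub_zero] at htbad
  have hIcc : ∀ τ ∈ Set.Icc t (t+c), |g τ - g t| < ε/2 := by
    intro τ hτ
    have h1 : (0:ℝ) ≤ τ := le_trans ht0 hτ.1
    have := hunif τ (Set.mem_Ici.mpr h1) t (Set.mem_Ici.mpr ht0) ?_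
    · rwa [Real.dist_eq] at this
    · rw [Real.dist_eq, abs_of_nonneg (by linarith [hτ.1])]
      have := hτ.2; simp only [hc_def] at *; linarith
  have hgint : IntervalIntegrable g MeasureTheory.volume t (t+c) :=
    hint t (t+c) ht0 (by linarith)
  have hconst : ∀ r : ℝ, (∫ _ in t..(t+c), r) = r * c := by
    intro r; rw [intervalIntegral.integral_const, smul_eq_mul]; ring
  rcases le_abs.mp htbad with hpos | hneg
  · have hlow : ε/2 * c ≤ ∫ τ in t..(t+c), g τ := by
      have h0 : ε/2 * c = ∫ _ in t..(t+c), (ε/2 : ℝ) := by rw [hconst]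
      rw [h0]
      apply intervalIntegral.integral_mono_on (by linarith) intervalIntegrable_const hgint
      intro τ hτ
      have h2 := abs_lt.mp (hIcc τ hτ)
      linarith [h2.1]
    have : ε/2 * c ≤ |∫ τ in t..(t+c), g τ| := le_trans hlow (le_abs_self _)
    linarith
  · have hup : (∫ τ in t..(t+c), g τ) ≤ -(ε/2) * c := by
      have h0 : -(ε/2) * c = ∫ _ in t..(t+c), (-(ε/2) : ℝ) := by rw [hconst]
      rw [h0]
      apply intervalIntegral.integral_mono_on (by linarith) hgint intervalIntegrable_const
      intro τ hτ
      have h2 := abs_lt.mp (hIcc τ hτ)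
      linarith [h2.2]
    have : ε/2 * c ≤ |∫ τ in t..(t+c), g τ| :=
      le_trans (by linarith) (neg_le_abs _)
    linarith
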